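/- arXiv:0904.2048 — 4 statements merged into one kernel-verified Lean document; each statement's English description precedes it below -/
import Mathlib

section
/- For any d₁, d₂ ≥ 1 and any vectors x : Fin d₁ → ℝ and y : Fin d₂ → ℝ, the second elementary symmetric polynomial of the tensor product factorises as e_2(x ⊗ y) = e_1(x)² · e_2(y) + e_2(x) · e_1(y)² − 2 · e_2(x) · e_2(y). -/
open Finset

/-- The `k`-th elementary symmetric polynomial of the entries of `x`. -/
noncomputable def esym {ι : Type*} [Fintype ι] (k : ℕ) (x : ι → ℝ) : ℝ :=
  ∑ S ∈ Finset.univ.powersetCard k, ∏ i ∈ S, x i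

/-- Tensor (Kronecker) product of two vectors. -/
def tensor {d₁ d₂ : ℕ} (x : Fin d₁ → ℝ) (y : Fin d₂ → ℝ) : Fin d₁ × Fin d₂ → ℝ :=
  fun p => x p.1 * y p.2

lemma esym1_aux {ι : Type*} [DecidableEq ι] (x : ι → ℝ) (s : Finset ι) :
    ∑ S ∈ s.powersetCard 1, ∏ i ∈ S, x i = ∑ i ∈ s, x i := by
  classical
  induction s using Finset.induction_on with
  | empty =>
    rw [Finset.powersetCard_eq_empty.mpr (by simp)]
    simp
  | insert _ _ ha ih =>
    rename_i a s
    rw [show (1:ℕ) = 0 + 1 from rfl, Finset.powersetCard_succ_insert ha]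
    rw [Finset.sum_union]
    · rw [Finset.sum_image (fun T hT U hU h => by
        simp only [Finset.powersetCard_zero, Finset.coe_singleton, Set.mem_singleton_iff] at hT hU
        subst hT; subst hU; rfl)]
      simp [ih, Finset.sum_insert ha, add_comm]
    · rw [Finset.disjoint_left]
      intro T hT hT'
      simp only [Finset.mem_powersetCard] at hT
      simp only [Finset.mem_image, Finset.powersetCard_zero, Finset.mem_singleton] at hT'
      obtain ⟨U, hU, rfl⟩ := hT'
      subst hU
      exact ha (hT.1 (by simp))

lemma esym2_aux {ι : Type*} [DecidableEq ι] (x : ι → ℝ) (s : Finset ι) :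
    2 * ∑ S ∈ s.powersetCard 2, ∏ i ∈ S, x i
      = (∑ i ∈ s, x i) ^ 2 - ∑ i ∈ s, (x i) ^ 2 := by
  classical
  induction s using Finset.induction_on with
  | empty =>
    rw [Finset.powersetCard_eq_empty.mpr (by simp)]
    simp
  | insert _ _ ha ih =>
    rename_i a s
    rw [show (2:ℕ) = 1 + 1 from rfl, Finset.powersetCard_succ_insert ha]
    rw [Finset.sum_union]
    · have hinj : ∀ T ∈ s.powersetCard 1, ∀ U ∈ s.powersetCard 1,
          insert a T = insert a U → T = U := by
        intro T hT U hU h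
        simp only [Finset.mem_powersetCard] at hT hU
        have haT : a ∉ T := fun h' => ha (hT.1 h')
        have haU : a ∉ U := fun h' => ha (hU.1 h')
        ext i
        constructor
        · intro hi
          have : i ∈ insert a U := h ▸ Finset.mem_insert_of_mem hi
          rcases Finset.mem_insert.mp this with rfl | hi'
          · exact absurd hi haT
          · exact hi'
        · intro hi
          have : i ∈ insert a T := h.symm ▸ Finset.mem_insert_of_mem hi
          rcases Finset.mem_insert.mp this with rfl | hi'
          · exact absurd hi haU
          · exact hi'
      rw [Finset.sum_image hinj]
      have : ∀ T ∈ s.powersetCard 1, ∏ i ∈ insert a T, x i = x a * ∏ i ∈ T, x i := by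
        intro T hT
        simp only [Finset.mem_powersetCard] at hT
        exact Finset.prod_insert (fun h => ha (hT.1 h))
      rw [Finset.sum_congr rfl this, ← Finset.mul_sum, esym1_aux]
      rw [Finset.sum_insert ha, Finset.sum_insert ha]
      ring_nf
      ring_nf at ih
      linarith
    · rw [Finset.disjoint_left]
      intro T hT hT'
      simp only [Finset.mem_powersetCard] at hT
      simp only [Finset.mem_image] at hT'
      obtain ⟨U, hU, rfl⟩ := hT'
      exact ha (hT.1 (Finset.mem_insert_self a U))

theorem esym_two_tensor (d₁ d₂ : ℕ) (h₁ : 1 ≤ d₁) (h₂ : 1 ≤ d₂)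
    (x : Fin d₁ → ℝ) (y : Fin d₂ → ℝ) :
    esym 2 (tensor x y) =
      (esym 1 x) ^ 2 * esym 2 y + esym 2 x * (esym 1 y) ^ 2 - 2 * esym 2 x * esym 2 y := by
  classical
  have e1x : esym 1 x = ∑ i, x i := esym1_aux x _
  have e1y : esym 1 y = ∑ i, y i := esym1_aux y _
  have e2x : 2 * esym 2 x = (∑ i, x i) ^ 2 - ∑ i, (x i) ^ 2 := esym2_aux x _
  have e2y : 2 * esym 2 y = (∑ i, y i) ^ 2 - ∑ i, (y i) ^ 2 := esym2_aux y _
  have e2t : 2 * esym 2 (tensor x y)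
      = (∑ p : Fin d₁ × Fin d₂, tensor x y p) ^ 2
        - ∑ p : Fin d₁ × Fin d₂, (tensor x y p) ^ 2 := esym2_aux _ _
  have hs1 : ∑ p : Fin d₁ × Fin d₂, tensor x y p = (∑ i, x i) * (∑ j, y j) := by
    rw [Fintype.sum_prod_type]
    simp only [tensor, Finset.mul_sum, Finset.sum_mul]
    exact Finset.sum_comm
  have hs2 : ∑ p : Fin d₁ × Fin d₂, (tensor x y p) ^ 2
      = (∑ i, (x i) ^ 2) * (∑ j, (y j) ^ 2) := by
    rw [Fintype.sum_prod_type]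
    simp only [tensor, mul_pow, Finset.mul_sum, Finset.sum_mul]
    exact Finset.sum_comm
  rw [hs1, hs2] at e2t
  rw [e1x, e1y,
    show esym 2 x = ((∑ i, x i) ^ 2 - ∑ i, (x i) ^ 2) / 2 from by linarith,
    show esym 2 y = ((∑ i, y i) ^ 2 - ∑ i, (y i) ^ 2) / 2 from by linarith,
    show esym 2 (tensor x y) = (((∑ i, x i) * ∑ j, y j) ^ 2
      - (∑ i, (x i) ^ 2) * ∑ j, (y j) ^ 2) / 2 from by linarith]
  ring
end

section
/- For any d₁, d₂ ≥ 1 and any vectors x : Fin d₁ → ℝ and y : Fin d₂ → ℝ, the second-to-top elementary symmetric polynomial of the tensor product factorises as e_{d₁·d₂ − 1}(x ⊗ y) = e_{d₁ − 1}(x) · e_{d₂ − 1}(y) · e_{d₁}(x)^{d₂ − 1} · e_{d₂}(y)^{d₁ − 1}. -/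
open Finset

lemma esym_top {ι : Type*} [Fintype ι] (x : ι → ℝ) :
    esym (Fintype.card ι) x = ∏ i, x i := by
  rw [esym, ← Finset.card_univ, Finset.powersetCard_self, Finset.sum_singleton]

lemma esym_sub_one {ι : Type*} [Fintype ι] [DecidableEq ι] [Nonempty ι] (x : ι → ℝ) :
    esym (Fintype.card ι - 1) x = ∑ i, ∏ j ∈ ({i}ᶜ : Finset ι), x j := by
  rw [esym]
  symm
  apply Finset.sum_bij (fun i _ => ({i}ᶜ : Finset ι))
  · intro i _
    rw [Finset.mem_powersetCard_univ, Finset.card_compl, Finset.card_singleton]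
  · intro a _ b _ h
    have := congrArg (fun S : Finset ι => Sᶜ) h
    simpa using this
  · intro S hS
    rw [Finset.mem_powersetCard_univ] at hS
    have hpos : 1 ≤ Fintype.card ι := Fintype.card_pos
    have h1 : Sᶜ.card = 1 := by
      rw [Finset.card_compl, hS]; omega
    obtain ⟨a, ha⟩ := Finset.card_eq_one.mp h1
    exact ⟨a, Finset.mem_univ a, by rw [← ha, compl_compl]⟩
  · intro i _; rfl

theorem esym_secondTop_tensor (d₁ d₂ : ℕ) (h₁ : 1 ≤ d₁) (h₂ : 1 ≤ d₂)
    (x : Fin d₁ → ℝ) (y : Fin d₂ → ℝ) :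
    esym (d₁ * d₂ - 1) (tensor x y) =
      esym (d₁ - 1) x * esym (d₂ - 1) y * (esym d₁ x) ^ (d₂ - 1) * (esym d₂ y) ^ (d₁ - 1) := by
  classical
  haveI : Nonempty (Fin d₁) := ⟨⟨0, h₁⟩⟩
  haveI : Nonempty (Fin d₂) := ⟨⟨0, h₂⟩⟩
  have e1 : esym (d₁ * d₂ - 1) (tensor x y)
      = ∑ p : Fin d₁ × Fin d₂, ∏ q ∈ ({p}ᶜ : Finset (Fin d₁ × Fin d₂)), tensor x y q := by
    rw [← esym_sub_one]; congr 1; simp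
  have e2 : esym (d₁ - 1) x = ∑ i, ∏ a ∈ ({i}ᶜ : Finset (Fin d₁)), x a := by
    rw [← esym_sub_one]; congr 1; simp
  have e3 : esym (d₂ - 1) y = ∑ j, ∏ b ∈ ({j}ᶜ : Finset (Fin d₂)), y b := by
    rw [← esym_sub_one]; congr 1; simp
  have e4 : esym d₁ x = ∏ a, x a := by
    rw [← esym_top]; congr 1; simp
  have e5 : esym d₂ y = ∏ b, y b := by
    rw [← esym_top]; congr 1; simp
  rw [e1, e2, e3, e4, e5, Fintype.sum_prod_type, Finset.sum_mul_sum]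
  simp only [Finset.sum_mul]
  apply Finset.sum_congr rfl
  intro i _
  apply Finset.sum_congr rfl
  intro j _
  -- key pointwise identity
  have hset : ({(i, j)}ᶜ : Finset (Fin d₁ × Fin d₂))
      = (({i}ᶜ : Finset (Fin d₁)) ×ˢ (univ : Finset (Fin d₂)))
        ∪ (({i} : Finset (Fin d₁)) ×ˢ ({j}ᶜ : Finset (Fin d₂))) := by
    ext ⟨a, b⟩
    simp [Prod.ext_iff]
    tauto
  have hdisj : Disjoint (({i}ᶜ : Finset (Fin d₁)) ×ˢ (univ : Finset (Fin d₂)))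
      (({i} : Finset (Fin d₁)) ×ˢ ({j}ᶜ : Finset (Fin d₂))) := by
    rw [Finset.disjoint_left]
    rintro ⟨a, b⟩ h1 h2
    simp at h1 h2
    exact h1 h2.2.symm
  rw [hset, Finset.prod_union hdisj, Finset.prod_product, Finset.prod_product]
  simp only [tensor, Finset.prod_mul_distrib, Finset.prod_const, Finset.prod_pow,
    Finset.card_univ, Fintype.card_fin, Finset.card_compl, Finset.card_singleton,
    Finset.prod_singleton]
  have hx : ∏ a, x a = x i * ∏ a ∈ ({i}ᶜ : Finset (Fin d₁)), x a := by
    rw [← Finset.prod_singleton (f := x) (a := i), Finset.prod_mul_prod_compl]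
  obtain ⟨m, rfl⟩ : ∃ m, d₂ = m + 1 := ⟨d₂ - 1, by omega⟩
  obtain ⟨n, rfl⟩ : ∃ n, d₁ = n + 1 := ⟨d₁ - 1, by omega⟩
  simp only [Nat.add_sub_cancel, hx]
  ring
end

section
/- Let d ≥ 2, b ≥ 1, and let x, y : Fin d → ℝ and c : Fin b → ℝ have nonnegative entries, each summing to 1 (Schmidt vectors), with c not identically zero. If e_2(x ⊗ c) ≥ e_2(y ⊗ c), then e_2(x) ≥ e_2(y). (In other words, the I-concurrence C_2 is a monotone under catalysis.) -/
open Finset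

lemma pair_eq_pair_iff' {ι : Type*} [DecidableEq ι] {a b c d : ι} :
    ({a, b} : Finset ι) = {c, d} ↔ a = c ∧ b = d ∨ a = d ∧ b = c := by
  rw [← Finset.coe_inj]
  simpa using Set.pair_eq_pair_iff

lemma sum_offDiag_eq {ι : Type*} [Fintype ι] [DecidableEq ι] (v : ι → ℝ) :
    ∑ p ∈ (Finset.univ : Finset ι).offDiag, v p.1 * v p.2 = 2 * esym 2 v := by
  have key : ∑ p ∈ (Finset.univ : Finset ι).offDiag, v p.1 * v p.2
      = ∑ p ∈ (Finset.univ : Finset ι).offDiag, ∏ i ∈ ({p.1, p.2} : Finset ι), v i := by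
    refine Finset.sum_congr rfl fun p hp => ?_
    have hne : p.1 ≠ p.2 := (Finset.mem_offDiag.1 hp).2.2
    rw [Finset.prod_insert (by simpa using hne), Finset.prod_singleton]
  rw [key, Finset.sum_comp (fun S : Finset ι => ∏ i ∈ S, v i)
    (fun p : ι × ι => ({p.1, p.2} : Finset ι))]
  have himg : (Finset.univ : Finset ι).offDiag.image
      (fun p : ι × ι => ({p.1, p.2} : Finset ι)) = Finset.univ.powersetCard 2 := by
    ext S
    simp only [Finset.mem_image, Finset.mem_powersetCard, Finset.mem_offDiag]
    constructor
    · rintro ⟨p, ⟨-, -, hne⟩, rfl⟩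
      exact ⟨Finset.subset_univ _, Finset.card_eq_two.2 ⟨p.1, p.2, hne, rfl⟩⟩
    · rintro ⟨-, hcard⟩
      obtain ⟨a, b, hab, rfl⟩ := Finset.card_eq_two.1 hcard
      exact ⟨(a, b), ⟨Finset.mem_univ _, Finset.mem_univ _, hab⟩, rfl⟩
  rw [himg, esym, Finset.mul_sum]
  refine Finset.sum_congr rfl fun S hS => ?_
  obtain ⟨a, b, hab, rfl⟩ := Finset.card_eq_two.1 (Finset.mem_powersetCard.1 hS).2
  have hfib : {p ∈ (Finset.univ : Finset ι).offDiag |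
      ({p.1, p.2} : Finset ι) = {a, b}} = {(a, b), (b, a)} := by
    ext p
    simp only [Finset.mem_filter, Finset.mem_offDiag, Finset.mem_univ, true_and,
      Finset.mem_insert, Finset.mem_singleton, pair_eq_pair_iff', Prod.ext_iff]
    constructor
    · rintro ⟨hne, (⟨h1, h2⟩ | ⟨h1, h2⟩)⟩
      · exact Or.inl ⟨h1, h2⟩
      · exact Or.inr ⟨h1, h2⟩
    · rintro (⟨h1, h2⟩ | ⟨h1, h2⟩) <;> subst h1 <;> subst h2
      · exact ⟨hab, Or.inl ⟨rfl, rfl⟩⟩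
      · exact ⟨hab.symm, Or.inr ⟨rfl, rfl⟩⟩
  rw [hfib]
  have : ({(a, b), (b, a)} : Finset (ι × ι)).card = 2 := by
    rw [Finset.card_insert_of_notMem (by simp [Prod.ext_iff, hab]), Finset.card_singleton]
  rw [this]
  simp [nsmul_eq_mul]

lemma esym_two_eq {ι : Type*} [Fintype ι] [DecidableEq ι] (v : ι → ℝ) :
    esym 2 v = ((∑ i, v i) ^ 2 - ∑ i, v i ^ 2) / 2 := by
  have hsq : (∑ i, v i) ^ 2 = ∑ p ∈ (Finset.univ : Finset ι) ×ˢ Finset.univ, v p.1 * v p.2 := by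
    rw [sq, Finset.sum_mul_sum, Finset.sum_product]
  rw [hsq, ← Finset.diag_union_offDiag,
    Finset.sum_union (Finset.disjoint_diag_offDiag _), Finset.sum_diag, sum_offDiag_eq]
  have : ∑ i, v i * v i = ∑ i, v i ^ 2 := by simp [sq]
  rw [this]
  ring

theorem iConcurrence_catalysis_monotone (d b : ℕ) (hd : 2 ≤ d) (hb : 1 ≤ b)
    (x y : Fin d → ℝ) (c : Fin b → ℝ)
    (hx : ∀ i, 0 ≤ x i) (hy : ∀ i, 0 ≤ y i) (hc : ∀ j, 0 ≤ c j)
    (hxs : ∑ i, x i = 1) (hys : ∑ i, y i = 1) (hcs : ∑ j, c j = 1)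
    (hc0 : c ≠ 0)
    (h : esym 2 (tensor x c) ≥ esym 2 (tensor y c)) :
    esym 2 x ≥ esym 2 y := by
  have hts : ∀ (u : Fin d → ℝ), (∑ i, u i = 1) → ∑ p : Fin d × Fin b, tensor u c p = 1 := by
    intro u hu
    rw [Fintype.sum_prod_type]
    simp only [tensor]
    rw [← Finset.sum_mul_sum, hu, hcs, mul_one]
  have htq : ∀ (u : Fin d → ℝ),
      ∑ p : Fin d × Fin b, (tensor u c p) ^ 2 = (∑ i, u i ^ 2) * (∑ j, c j ^ 2) := by
    intro u
    rw [Fintype.sum_prod_type, Finset.sum_mul_sum]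
    simp [tensor, mul_pow]
  have hQc : 0 < ∑ j, c j ^ 2 := by
    rcases lt_or_eq_of_le (Finset.sum_nonneg fun j _ => sq_nonneg (c j)) with h' | h'
    · exact h'
    · exfalso
      have hall := (Finset.sum_eq_zero_iff_of_nonneg fun j _ => sq_nonneg (c j)).1 h'.symm
      have hz : ∑ j, c j = 0 := Finset.sum_eq_zero fun j hj =>
        pow_eq_zero_iff (n := 2) (by norm_num) |>.1 (hall j hj)
      rw [hcs] at hz
      norm_num at hz
  rw [esym_two_eq, esym_two_eq, hts x hxs, hts y hys, htq, htq] at h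
  have hq : (∑ i, x i ^ 2) * (∑ j, c j ^ 2) ≤ (∑ i, y i ^ 2) * (∑ j, c j ^ 2) := by linarith
  have := le_of_mul_le_mul_right hq hQc
  rw [esym_two_eq, esym_two_eq, hxs, hys]
  linarith
end

section
/- Let b ≥ 1 and let c : Fin b → ℝ have nonnegative entries summing to 1. Then e_2(c) − 2·e_3(c) ≥ 0 and 1 − 2·e_2(c) + 3·e_3(c) > 0; consequently the ratio r(c) = (e_2(c) − 2·e_3(c)) / (1 − 2·e_2(c) + 3·e_3(c)) is nonnegative. -/
open Finset

lemma eval_esymm_aux {b : ℕ} (c : Fin b → ℝ) (k : ℕ) :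
    MvPolynomial.eval c (MvPolynomial.esymm (Fin b) ℝ k) = esym k c := by
  simp [MvPolynomial.esymm, esym, map_sum]

lemma eval_psum_aux {b : ℕ} (c : Fin b → ℝ) (k : ℕ) :
    MvPolynomial.eval c (MvPolynomial.psum (Fin b) ℝ k) = ∑ i, c i ^ k := by
  simp [MvPolynomial.psum, map_sum]

lemma newton2_aux {b : ℕ} (c : Fin b → ℝ) (hcs : ∑ j, c j = 1) :
    1 - 2 * esym 2 c = ∑ i, c i ^ 2 := by
  have h := congrArg (MvPolynomial.eval c) (MvPolynomial.mul_esymm_eq_sum (Fin b) ℝ 2)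
  have e : ({a ∈ antidiagonal 2 | a.1 < 2} : Finset (ℕ × ℕ)) = {(0,2),(1,1)} := by decide
  rw [e] at h
  simp [eval_esymm_aux, eval_psum_aux] at h
  rw [hcs] at h
  norm_num at h
  linarith

lemma newton3_aux {b : ℕ} (c : Fin b → ℝ) (hcs : ∑ j, c j = 1) :
    esym 2 c - 3 * esym 3 c = (∑ i, c i ^ 2) - ∑ i, c i ^ 3 := by
  have h := congrArg (MvPolynomial.eval c) (MvPolynomial.mul_esymm_eq_sum (Fin b) ℝ 3)
  have e : ({a ∈ antidiagonal 3 | a.1 < 3} : Finset (ℕ × ℕ)) = {(0,3),(1,2),(2,1)} := by decide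
  rw [e] at h
  simp [eval_esymm_aux, eval_psum_aux] at h
  rw [hcs] at h
  norm_num at h
  linarith

theorem r_nonneg (b : ℕ) (hb : 1 ≤ b) (c : Fin b → ℝ)
    (hc : ∀ j, 0 ≤ c j) (hcs : ∑ j, c j = 1) :
    esym 2 c - 2 * esym 3 c ≥ 0 ∧ 1 - 2 * esym 2 c + 3 * esym 3 c > 0 ∧
      (esym 2 c - 2 * esym 3 c) / (1 - 2 * esym 2 c + 3 * esym 3 c) ≥ 0 := by
  have hle : ∀ i, c i ≤ 1 := by
    intro i
    rw [← hcs]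
    exact Finset.single_le_sum (fun j _ => hc j) (Finset.mem_univ i)
  have he3 : 0 ≤ esym 3 c :=
    Finset.sum_nonneg fun S _ => Finset.prod_nonneg fun i _ => hc i
  have hP : 0 ≤ (∑ i, c i ^ 2) - ∑ i, c i ^ 3 := by
    rw [← Finset.sum_sub_distrib]
    exact Finset.sum_nonneg fun i _ => by nlinarith [hc i, hle i]
  have hP2 : 0 < ∑ i, c i ^ 2 := by
    obtain ⟨i, hi⟩ : ∃ i ∈ Finset.univ, c i ≠ 0 := by
      apply Finset.exists_ne_zero_of_sum_ne_zero
      rw [hcs]; norm_num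
    calc (0 : ℝ) < c i ^ 2 := pow_pos (lt_of_le_of_ne (hc i) (Ne.symm hi.2)) 2
      _ ≤ ∑ i, c i ^ 2 := Finset.single_le_sum (fun j _ => sq_nonneg (c j)) (Finset.mem_univ i)
  have h2 := newton2_aux c hcs
  have h3 := newton3_aux c hcs
  refine ⟨by linarith, by linarith, div_nonneg (by linarith) (by linarith)⟩
end
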